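/- Let α ≥ 0 and set d_k = 1 + α(k+1). Suppose f(z) = 1/z + Σ_{k≥1} a_k z^k satisfies Σ_{k≥1} d_k |a_k| ≤ 1. For n ≥ 1 let S_n(z) = 1/z + Σ_{k=1}^{n-1} a_k z^k. Then Re(f(z)/S_n(z)) > 1 − 1/d_n for all z in the punctured unit disc E. -/

import Mathlib

open Complex

set_option maxHeartbeats 1000000

theorem stmt16 (α : ℝ) (hα : 0 ≤ α) (a : ℕ → ℂ)
    (hSum : Summable fun k : ℕ => (1 + α * (k + 2)) * ‖a (k + 1)‖)
    (hb : (∑' k : ℕ, (1 + α * (k + 2)) * ‖a (k + 1)‖) ≤ 1)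
    (f : ℂ → ℂ)
    (hf : ∀ z : ℂ, z ≠ 0 → f z = z⁻¹ + ∑' k : ℕ, a (k + 1) * z ^ (k + 1))
    (n : ℕ) (hn : 1 ≤ n)
    (S : ℂ → ℂ)
    (hS : ∀ z : ℂ, z ≠ 0 → S z = z⁻¹ + ∑ k ∈ Finset.Icc 1 (n - 1), a k * z ^ k) :
    ∀ z : ℂ, 0 < ‖z‖ → ‖z‖ < 1 →
      (f z / S z).re > 1 - 1 / (1 + α * (n + 1)) := by
  intro z hz0 hz1
  have hz : z ≠ 0 := by
    intro h; rw [h] at hz0; simp at hz0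
  obtain ⟨m, rfl⟩ : ∃ m, n = m + 1 := ⟨n - 1, by omega⟩
  set r : ℝ := ‖z‖ with hr
  have hr0 : 0 < r := hz0
  have hr1 : r < 1 := hz1
  set D : ℕ → ℝ := fun k => 1 + α * (k + 2) with hD
  set A : ℕ → ℝ := fun k => ‖a (k + 1)‖ with hA
  have hDA : Summable (fun k : ℕ => D k * A k) := hSum
  have hbDA : (∑' k : ℕ, D k * A k) ≤ 1 := hb
  have hD1 : ∀ k : ℕ, 1 ≤ D k := by
    intro k
    have : (0 : ℝ) ≤ (k : ℝ) := Nat.cast_nonneg k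
    simp only [hD]
    nlinarith
  have hA0 : ∀ k : ℕ, 0 ≤ A k := fun k => norm_nonneg _
  have hrk : ∀ k : ℕ, r ^ k ≤ 1 := fun k =>
    pow_le_one₀ hr0.le hr1.le
  -- u k : absolute value of term a (k+1) z^(k+1) multiplied by extra r
  set u : ℕ → ℝ := fun k => A k * r ^ (k + 2) with hu_def
  have hu0 : ∀ k, 0 ≤ u k := fun k =>
    mul_nonneg (hA0 k) (pow_nonneg hr0.le _)
  have huD : ∀ k, u k ≤ D k * A k := by
    intro k
    have h1 : u k ≤ A k := by
      simpa using mul_le_mul_of_nonneg_left (hrk (k + 2)) (hA0 k)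
    exact h1.trans (le_mul_of_one_le_left (hA0 k) (hD1 k))
  have hu : Summable u := Summable.of_nonneg_of_le hu0 huD hDA
  have hDu0 : ∀ k, 0 ≤ D k * u k := fun k =>
    mul_nonneg (le_trans zero_le_one (hD1 k)) (hu0 k)
  have hDu : Summable (fun k : ℕ => D k * u k) := by
    apply Summable.of_nonneg_of_le hDu0 _ hDA
    intro k
    have : u k ≤ A k := by
      simpa using mul_le_mul_of_nonneg_left (hrk (k + 2)) (hA0 k)
    exact mul_le_mul_of_nonneg_left this (le_trans zero_le_one (hD1 k))
  -- the series terms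
  set g : ℕ → ℂ := fun k => a (k + 1) * z ^ (k + 1) with hg_def
  have hgnorm : ∀ k, ‖g k‖ = A k * r ^ (k + 1) := by
    intro k
    simp [hg_def, hA, norm_mul, norm_pow, hr]
  have hgsumnorm : Summable (fun k => ‖g k‖) := by
    apply Summable.of_nonneg_of_le (fun k => norm_nonneg _) _ hDA
    intro k
    rw [hgnorm]
    have h1 : A k * r ^ (k + 1) ≤ A k := by
      simpa using mul_le_mul_of_nonneg_left (hrk (k + 1)) (hA0 k)
    exact h1.trans (le_mul_of_one_le_left (hA0 k) (hD1 k))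
  have hg : Summable g := by
    apply Summable.of_norm
    simpa using hgsumnorm
  -- rewrite S
  have hSz : S z = z⁻¹ + ∑ k ∈ Finset.range m, g k := by
    rw [hS z hz]
    congr 1
    have : m + 1 - 1 = m := by omega
    rw [this, ← Finset.Ico_add_one_right_eq_Icc, Finset.sum_Ico_eq_sum_range]
    apply Finset.sum_congr (by congr 1)
    intro k _
    simp [hg_def, add_comm 1 k]
  -- the tail
  set T : ℂ := ∑' j : ℕ, g (j + m) with hT_def
  have hfS : f z = S z + T := by
    rw [hf z hz, hSz, hT_def]
    have := Summable.sum_add_tsum_nat_add m hg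
    push_cast at this ⊢
    rw [← this]
    ring
  -- bound on |T| * r
  have hgm : Summable (fun j => ‖g (j + m)‖) :=
    (summable_nat_add_iff m).mpr hgsumnorm
  have hum : Summable (fun j => u (j + m)) := (summable_nat_add_iff m).mpr hu
  have hDum : Summable (fun j => D (j + m) * u (j + m)) :=
    (summable_nat_add_iff m).mpr hDu
  have hTbound : ‖T‖ * r ≤ ∑' j : ℕ, u (j + m) := by
    have h1 : ‖T‖ ≤ ∑' j : ℕ, ‖g (j + m)‖ := by
      simpa using
        norm_tsum_le_tsum_norm (f := fun j => g (j + m))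
          (by simpa using hgm)
    calc ‖T‖ * r ≤ (∑' j : ℕ, ‖g (j + m)‖) * r :=
          mul_le_mul_of_nonneg_right h1 hr0.le
      _ = ∑' j : ℕ, ‖g (j + m)‖ * r := (tsum_mul_right).symm
      _ = ∑' j : ℕ, u (j + m) := by
          apply tsum_congr
          intro j
          rw [hgnorm]
          simp only [hu_def]
          ring
  -- lower bound on |z * S z|
  have hzS : 1 - ∑ k ∈ Finset.range m, u k ≤ ‖z * S z‖ := by
    have hexp : z * S z = 1 + ∑ k ∈ Finset.range m, z * g k := by
      rw [hSz, mul_add, mul_inv_cancel₀ hz, Finset.mul_sum]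
    rw [hexp]
    set w : ℂ := ∑ k ∈ Finset.range m, z * g k with hw
    have h1 : ‖w‖ ≤ ∑ k ∈ Finset.range m, u k := by
      refine le_trans (norm_sum_le _ _) ?_
      apply Finset.sum_le_sum
      intro k _
      rw [norm_mul, hgnorm]
      simp only [hu_def, ← hr]
      ring_nf
      exact le_refl _
    have h2 : ‖(1 : ℂ)‖ ≤ ‖1 + w‖ + ‖w‖ := by
      calc ‖(1 : ℂ)‖ = ‖(1 + w) + (-w)‖ := by ring_nf
        _ ≤ ‖1 + w‖ + ‖-w‖ := norm_add_le _ _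
        _ = ‖1 + w‖ + ‖w‖ := by rw [norm_neg]
    simp only [norm_one] at h2
    linarith
  -- key inequality
  have hDm0 : 0 < D m := lt_of_lt_of_le zero_lt_one (hD1 m)
  have hkey : D m * (∑' j : ℕ, u (j + m)) + ∑ k ∈ Finset.range m, u k < 1 := by
    have h1 : D m * (∑' j : ℕ, u (j + m)) ≤ ∑' j : ℕ, D (j + m) * u (j + m) := by
      rw [← tsum_mul_left]
      apply Summable.tsum_le_tsum _ (hum.mul_left _) hDum
      intro j
      apply mul_le_mul_of_nonneg_right _ (hu0 _)
      simp only [hD]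
      have : (m : ℝ) ≤ (j + m : ℕ) := by push_cast; linarith [Nat.cast_nonneg (α := ℝ) j]
      nlinarith
    have h2 : ∑ k ∈ Finset.range m, u k ≤ ∑ k ∈ Finset.range m, D k * u k :=
      Finset.sum_le_sum fun k _ => le_mul_of_one_le_left (hu0 k) (hD1 k)
    have h3 : ∑ k ∈ Finset.range m, D k * u k + ∑' j : ℕ, D (j + m) * u (j + m)
        = ∑' k : ℕ, D k * u k := Summable.sum_add_tsum_nat_add m hDu
    have h4 : (∑' k : ℕ, D k * u k) ≤ r ^ 2 * ∑' k : ℕ, D k * A k := by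
      rw [← tsum_mul_left]
      apply Summable.tsum_le_tsum _ hDu (hDA.mul_left _)
      intro k
      simp only [hu_def]
      have hr2 : r ^ (k + 2) ≤ r ^ 2 := by
        calc r ^ (k + 2) = r ^ k * r ^ 2 := by ring
          _ ≤ 1 * r ^ 2 := by
              apply mul_le_mul_of_nonneg_right (hrk k) (pow_nonneg hr0.le 2)
          _ = r ^ 2 := one_mul _
      calc D k * (A k * r ^ (k + 2)) = (D k * A k) * r ^ (k + 2) := by ring
        _ ≤ (D k * A k) * r ^ 2 := by
            apply mul_le_mul_of_nonneg_left hr2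
            exact mul_nonneg (le_trans zero_le_one (hD1 k)) (hA0 k)
        _ = r ^ 2 * (D k * A k) := by ring
    have h5 : r ^ 2 * (∑' k : ℕ, D k * A k) ≤ r ^ 2 * 1 :=
      mul_le_mul_of_nonneg_left hbDA (pow_nonneg hr0.le 2)
    have h6 : r ^ 2 < 1 := by nlinarith
    linarith
  -- |S z| > 0
  have hum0 : 0 ≤ ∑' j : ℕ, u (j + m) := tsum_nonneg fun j => hu0 _
  have hrange0 : 0 ≤ ∑ k ∈ Finset.range m, u k :=
    Finset.sum_nonneg fun k _ => hu0 k
  have hzSpos : 0 < ‖z * S z‖ := by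
    have : 0 < 1 - ∑ k ∈ Finset.range m, u k := by nlinarith
    linarith
  have hSabs : ‖z * S z‖ = r * ‖S z‖ := by
    rw [norm_mul, hr]
  have hSpos : 0 < ‖S z‖ := by
    rw [hSabs] at hzSpos
    nlinarith [norm_nonneg (S z)]
  have hSne : S z ≠ 0 := fun h => by simp [h] at hSpos
  -- main estimate : D m * |T| < |S z|
  have hmain : D m * ‖T‖ < ‖S z‖ := by
    have h1 : D m * ‖T‖ * r ≤ D m * ∑' j : ℕ, u (j + m) := by
      calc D m * ‖T‖ * r = D m * (‖T‖ * r) := by ring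
        _ ≤ D m * ∑' j : ℕ, u (j + m) :=
            mul_le_mul_of_nonneg_left hTbound hDm0.le
    have h2 : D m * ‖T‖ * r < ‖S z‖ * r := by
      calc D m * ‖T‖ * r ≤ D m * ∑' j : ℕ, u (j + m) := h1
        _ < 1 - ∑ k ∈ Finset.range m, u k := by linarith
        _ ≤ ‖z * S z‖ := hzS
        _ = ‖S z‖ * r := by rw [hSabs]; ring
    exact lt_of_mul_lt_mul_right h2 hr0.le
  -- conclude
  have hdiv : f z / S z = 1 + T / S z := by
    rw [hfS, add_div, div_self hSne]
  have h7 : ‖T / S z‖ < 1 / D m := by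
    rw [norm_div, div_lt_div_iff₀ hSpos hDm0]
    linarith
  have h8 : -(‖T / S z‖) ≤ (T / S z).re :=
    neg_le_of_abs_le (Complex.abs_re_le_norm _)
  have hDmgoal : (1 : ℝ) + α * ((↑(m + 1) : ℝ) + 1) = D m := by
    simp only [hD]; push_cast; ring
  rw [hdiv, Complex.add_re, Complex.one_re]
  push_cast
  push_cast at hDmgoal
  rw [hDmgoal]
  linarith
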